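/- Let X₂, X₃ : [0,1] → ℝ be square-integrable with a ≠ 0, X_t = (a, X_{2,t}, X_{3,t})'. Then det(∫₀¹ X_t X_t' dt) = 0 if and only if at least one of the following holds almost everywhere on [0,1]: (i) X_{2,t} = ∫₀¹X_{2,s}ds; (ii) X_{3,t} = ∫₀¹X_{3,s}ds; (iii) there exists c ≠ 0 with X_{2,t} − ∫₀¹X_{2,s}ds = c(X_{3,t} − ∫₀¹X_{3,s}ds). -/

import Mathlib

open MeasureTheory

lemma cs_aux {E : Type*} [NormedAddCommGroup E] [InnerProductSpace ℝ E] (f g : E) :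
    ‖f‖ ^ 2 * ‖g‖ ^ 2 - (inner ℝ f g) * (inner ℝ f g) = 0 ↔
      f = 0 ∨ g = 0 ∨ ∃ c : ℝ, c ≠ 0 ∧ f = c • g := by
  constructor
  · intro h
    rcases eq_or_ne f 0 with hf | hf
    · exact Or.inl hf
    rcases eq_or_ne g 0 with hg | hg
    · exact Or.inr (Or.inl hg)
    have hfn : ‖f‖ ≠ 0 := norm_ne_zero_iff.mpr hf
    have hgn : ‖g‖ ≠ 0 := norm_ne_zero_iff.mpr hg
    have h' : (inner ℝ f g) * (inner ℝ f g) = (‖f‖ * ‖g‖) * (‖f‖ * ‖g‖) := by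
      ring_nf; nlinarith [h]
    rcases mul_self_eq_mul_self_iff.mp h' with h1 | h1
    · have hs := inner_eq_norm_mul_iff_real.mp h1
      refine Or.inr (Or.inr ⟨‖g‖⁻¹ * ‖f‖, by positivity, ?_⟩)
      rw [← smul_smul, ← hs, smul_smul, inv_mul_cancel₀ hgn, one_smul]
    · have h2 : (inner ℝ f (-g)) = ‖f‖ * ‖-g‖ := by
        rw [inner_neg_right, norm_neg]; linarith
      have hs := inner_eq_norm_mul_iff_real.mp h2
      rw [norm_neg, smul_neg] at hs
      refine Or.inr (Or.inr ⟨-(‖g‖⁻¹ * ‖f‖), ?_, ?_⟩)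
      · simp [hfn, hgn]
      · rw [neg_smul, ← smul_smul, ← smul_neg, ← hs, smul_smul,
          inv_mul_cancel₀ hgn, one_smul]
  · rintro (rfl | rfl | ⟨c, hc, rfl⟩)
    · simp
    · simp
    · have h1 : (inner ℝ (c • g) g) = c * ‖g‖ ^ 2 := by
        rw [real_inner_smul_left, real_inner_self_eq_norm_sq]
      rw [h1, norm_smul]
      simp only [Real.norm_eq_abs, mul_pow, sq_abs]
      ring

lemma memLp_integrable_mul {α : Type*} [MeasurableSpace α] {μ : Measure α} {f g : α → ℝ}
    (hf : MemLp f 2 μ) (hg : MemLp g 2 μ) : Integrable (fun x => f x * g x) μ := by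
  have h := L2.integrable_inner (𝕜 := ℝ) (hf.toLp f) (hg.toLp g)
  refine h.congr ?_
  filter_upwards [hf.coeFn_toLp, hg.coeFn_toLp] with x h1 h2
  simp [h1, h2, RCLike.inner_apply, mul_comm]

lemma expand_centered {α : Type*} [MeasurableSpace α] {μ : Measure α} [IsProbabilityMeasure μ]
    {F G : α → ℝ} (hF : MemLp F 2 μ) (hG : MemLp G 2 μ) :
    ∫ t, (F t - ∫ s, F s ∂μ) * (G t - ∫ s, G s ∂μ) ∂μ
      = (∫ t, F t * G t ∂μ) - (∫ s, F s ∂μ) * (∫ s, G s ∂μ) := by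
  have hiF : Integrable F μ := hF.integrable one_le_two
  have hiG : Integrable G μ := hG.integrable one_le_two
  have hFG : Integrable (fun t => F t * G t) μ := memLp_integrable_mul hF hG
  set mF := ∫ s, F s ∂μ with hmF
  set mG := ∫ s, G s ∂μ with hmG
  have h1 : (fun t => (F t - mF) * (G t - mG))
      = fun t => (F t * G t - mF * G t) - (mG * F t - mF * mG) := by funext t; ring
  have hb1 : Integrable (fun t => mF * G t) μ := hiG.const_mul mF
  have hb2 : Integrable (fun t => mG * F t) μ := hiF.const_mul mG
  have hb3 : Integrable (fun _ : α => mF * mG) μ := integrable_const _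
  have ha1 : Integrable (fun t => F t * G t - mF * G t) μ := hFG.sub hb1
  have ha2 : Integrable (fun t => mG * F t - mF * mG) μ := hb2.sub hb3
  rw [h1, integral_sub ha1 ha2, integral_sub hFG hb1, integral_sub hb2 hb3,
     integral_const_mul, integral_const_mul, integral_const]
  simp only [measure_univ, probReal_univ, ENNReal.toReal_one, one_smul, ← hmF, ← hmG]
  ring

/-- For `X_t = (a, X₂(t), X₃(t))'` with `a ≠ 0` and `X₂, X₃` square-integrable on `[0,1]`,
`det(∫₀¹ X_t X_t' dt) = 0` iff, almost everywhere on `[0,1]`: (i) `X₂` equals its mean, or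
(ii) `X₃` equals its mean, or (iii) there is `c ≠ 0` with
`X₂ - ∫X₂ = c (X₃ - ∫X₃)` a.e. -/
theorem stmt6 (a : ℝ) (ha : a ≠ 0) (X₂ X₃ : ℝ → ℝ)
    (h2 : MemLp X₂ 2 (volume.restrict (Set.Ioc (0 : ℝ) 1)))
    (h3 : MemLp X₃ 2 (volume.restrict (Set.Ioc (0 : ℝ) 1))) :
    (Matrix.of fun i j : Fin 3 =>
        ∫ t in (0 : ℝ)..1, ![a, X₂ t, X₃ t] i * ![a, X₂ t, X₃ t] j).det = 0 ↔
      ((∀ᵐ t ∂volume.restrict (Set.Ioc (0 : ℝ) 1), X₂ t = ∫ s in (0 : ℝ)..1, X₂ s) ∨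
       (∀ᵐ t ∂volume.restrict (Set.Ioc (0 : ℝ) 1), X₃ t = ∫ s in (0 : ℝ)..1, X₃ s) ∨
       (∃ c : ℝ, c ≠ 0 ∧ ∀ᵐ t ∂volume.restrict (Set.Ioc (0 : ℝ) 1),
          X₂ t - ∫ s in (0 : ℝ)..1, X₂ s = c * (X₃ t - ∫ s in (0 : ℝ)..1, X₃ s))) := by
  set μ := volume.restrict (Set.Ioc (0 : ℝ) 1) with hμ
  haveI : IsProbabilityMeasure μ := ⟨by rw [hμ]; simp⟩
  have cnv : ∀ f : ℝ → ℝ, (∫ t in (0 : ℝ)..1, f t) = ∫ t, f t ∂μ := fun f => by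
    rw [intervalIntegral.integral_of_le zero_le_one, hμ]
  set m₂ := ∫ t, X₂ t ∂μ with hm₂
  set m₃ := ∫ t, X₃ t ∂μ with hm₃
  have h2c : MemLp (fun t => X₂ t - m₂) 2 μ := h2.sub (memLp_const m₂)
  have h3c : MemLp (fun t => X₃ t - m₃) 2 μ := h3.sub (memLp_const m₃)
  set f := h2c.toLp _ with hf
  set g := h3c.toLp _ with hg
  -- values of norms and inner product
  have hfA : ‖f‖ ^ 2 = ∫ t, (X₂ t - m₂) * (X₂ t - m₂) ∂μ := by
    rw [← real_inner_self_eq_norm_sq, L2.inner_def]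
    refine integral_congr_ae ?_
    filter_upwards [h2c.coeFn_toLp] with t ht
    simp [hf, ht, RCLike.inner_apply, sq]
  have hgC : ‖g‖ ^ 2 = ∫ t, (X₃ t - m₃) * (X₃ t - m₃) ∂μ := by
    rw [← real_inner_self_eq_norm_sq, L2.inner_def]
    refine integral_congr_ae ?_
    filter_upwards [h3c.coeFn_toLp] with t ht
    simp [hg, ht, RCLike.inner_apply, sq]
  have hB : (inner ℝ f g) = ∫ t, (X₂ t - m₂) * (X₃ t - m₃) ∂μ := by
    rw [L2.inner_def]
    refine integral_congr_ae ?_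
    filter_upwards [h2c.coeFn_toLp, h3c.coeFn_toLp] with t ht hs
    simp [hf, hg, ht, hs, RCLike.inner_apply, mul_comm]
  -- expansions
  have hA' : ∫ t, (X₂ t - m₂) * (X₂ t - m₂) ∂μ = (∫ t, X₂ t * X₂ t ∂μ) - m₂ * m₂ := by
    rw [hm₂]; exact expand_centered h2 h2
  have hC' : ∫ t, (X₃ t - m₃) * (X₃ t - m₃) ∂μ = (∫ t, X₃ t * X₃ t ∂μ) - m₃ * m₃ := by
    rw [hm₃]; exact expand_centered h3 h3
  have hB' : ∫ t, (X₂ t - m₂) * (X₃ t - m₃) ∂μ = (∫ t, X₂ t * X₃ t ∂μ) - m₂ * m₃ := by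
    rw [hm₂, hm₃]; exact expand_centered h2 h3
  -- determinant value
  have hdet : (Matrix.of fun i j : Fin 3 =>
        ∫ t in (0 : ℝ)..1, ![a, X₂ t, X₃ t] i * ![a, X₂ t, X₃ t] j).det
      = a ^ 2 * (‖f‖ ^ 2 * ‖g‖ ^ 2 - (inner ℝ f g) * (inner ℝ f g)) := by
    rw [Matrix.det_fin_three]
    simp only [Matrix.of_apply, Matrix.cons_val', Matrix.cons_val_zero, Matrix.cons_val_one,
      Matrix.head_cons, Matrix.cons_val_two, Matrix.tail_cons, Matrix.empty_val',
      Matrix.cons_val_fin_one, Matrix.head_fin_const]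
    simp only [cnv]
    have e00 : ∫ _t, a * a ∂μ = a * a := by simp
    have e02 : ∫ t, a * X₂ t ∂μ = a * m₂ := by rw [integral_const_mul, ← hm₂]
    have e03 : ∫ t, a * X₃ t ∂μ = a * m₃ := by rw [integral_const_mul, ← hm₃]
    have e20 : ∫ t, X₂ t * a ∂μ = m₂ * a := by rw [integral_mul_const, ← hm₂]
    have e30 : ∫ t, X₃ t * a ∂μ = m₃ * a := by rw [integral_mul_const, ← hm₃]
    have e32 : ∫ t, X₃ t * X₂ t ∂μ = ∫ t, X₂ t * X₃ t ∂μ :=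
      integral_congr_ae (Filter.Eventually.of_forall fun t => mul_comm _ _)
    rw [e00, e02, e03, e20, e30, e32, hfA, hgC, hB, hA', hB', hC']
    ring
  rw [hdet]
  have ha2 : a ^ 2 ≠ 0 := pow_ne_zero _ ha
  rw [mul_eq_zero, or_iff_right ha2, cs_aux]
  -- translate the three conditions
  have iff1 : f = 0 ↔ ∀ᵐ t ∂μ, X₂ t = ∫ s in (0 : ℝ)..1, X₂ s := by
    rw [cnv X₂, ← hm₂, hf, ← MemLp.toLp_zero (MemLp.zero : MemLp (0 : ℝ → ℝ) 2 μ),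
      MemLp.toLp_eq_toLp_iff]
    constructor <;> intro h <;> filter_upwards [h] with t ht
    · simpa [sub_eq_zero] using ht
    · simpa [sub_eq_zero] using ht
  have iff2 : g = 0 ↔ ∀ᵐ t ∂μ, X₃ t = ∫ s in (0 : ℝ)..1, X₃ s := by
    rw [cnv X₃, ← hm₃, hg, ← MemLp.toLp_zero (MemLp.zero : MemLp (0 : ℝ → ℝ) 2 μ),
      MemLp.toLp_eq_toLp_iff]
    constructor <;> intro h <;> filter_upwards [h] with t ht
    · simpa [sub_eq_zero] using ht
    · simpa [sub_eq_zero] using ht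
  have iff3 : (∃ c : ℝ, c ≠ 0 ∧ f = c • g) ↔
      (∃ c : ℝ, c ≠ 0 ∧ ∀ᵐ t ∂μ,
        X₂ t - ∫ s in (0 : ℝ)..1, X₂ s = c * (X₃ t - ∫ s in (0 : ℝ)..1, X₃ s)) := by
    rw [cnv X₂, cnv X₃, ← hm₂, ← hm₃]
    refine exists_congr fun c => and_congr_right fun _hc => ?_
    rw [hf, hg, ← MemLp.toLp_const_smul c h3c, MemLp.toLp_eq_toLp_iff]
    constructor <;> intro h <;> filter_upwards [h] with t ht
    · simpa using ht
    · simpa using ht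
  rw [iff1, iff2, iff3]
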